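/- Let (Ω, 𝓕, P) be a probability space, (Ψ, 𝓖) a measurable space, X : Ω → Ψ measurable, and f : Ψ → (0, ∞) measurable with ∫ f(X ω) dP(ω) = 1. Let Q := P.withDensity (fun ω ↦ f(X ω)), a probability measure. Assume ω ↦ log f(X ω) is P-integrable. Then ∫_Ψ log( ((P.map X).rnDeriv (Q.map X)) x ).toReal d(P.map X)(x) = ∫_Ω log( (P.rnDeriv Q ω).toReal ) dP(ω) = − ∫_Ω log f(X ω) dP(ω). -/

import Mathlib

open MeasureTheory
open scoped ENNReal

lemma map_withDensity_comp {Ω Ψ : Type*} {mΩ : MeasurableSpace Ω} {mΨ : MeasurableSpace Ψ}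
    (μ : Measure Ω) (X : Ω → Ψ) (hX : Measurable X) (g : Ψ → ℝ≥0∞) (hg : Measurable g) :
    (μ.withDensity (fun ω => g (X ω))).map X = (μ.map X).withDensity g := by
  ext s hs
  rw [Measure.map_apply hX hs, withDensity_apply _ (hX hs), withDensity_apply _ hs,
    setLIntegral_map hs hg hX]

/-- If the change-of-measure density factors through `X` as a positive function `f ∘ X`,
then the KL-type integral between the pushforward laws of `X` equals the corresponding
integral on the underlying space, and both equal `-E_P[log f(X)]`. -/
theorem log_rnDeriv_pushforward_eq
    {Ω Ψ : Type*} {mΩ : MeasurableSpace Ω} {mΨ : MeasurableSpace Ψ}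
    (P : Measure Ω) [IsProbabilityMeasure P]
    (X : Ω → Ψ) (hX : Measurable X)
    (f : Ψ → ℝ) (hf_meas : Measurable f) (hf_pos : ∀ x, 0 < f x)
    (hf_int : ∫ ω, f (X ω) ∂P = 1)
    (Q : Measure Ω) (hQ : Q = P.withDensity (fun ω => ENNReal.ofReal (f (X ω))))
    (hlog_int : Integrable (fun ω => Real.log (f (X ω))) P) :
    (∫ x, Real.log (((P.map X).rnDeriv (Q.map X)) x).toReal ∂(P.map X)
        = ∫ ω, Real.log ((P.rnDeriv Q ω).toReal) ∂P) ∧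
    (∫ ω, Real.log ((P.rnDeriv Q ω).toReal) ∂P
        = - ∫ ω, Real.log (f (X ω)) ∂P) := by
  have hg : Measurable (fun x => ENNReal.ofReal (f x)) := hf_meas.ennreal_ofReal
  -- rnDeriv on base space
  have h1 : P.rnDeriv Q =ᵐ[P] fun ω => (ENNReal.ofReal (f (X ω)))⁻¹ := by
    rw [hQ]
    have := Measure.rnDeriv_withDensity_right P P (f := fun ω => ENNReal.ofReal (f (X ω)))
      (hg.comp hX).aemeasurable
      (Filter.Eventually.of_forall fun ω => by
        simp [hf_pos (X ω)])
      (Filter.Eventually.of_forall fun ω => ENNReal.ofReal_ne_top)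
    filter_upwards [this, Measure.rnDeriv_self P] with ω h h2
    rw [h, h2]; simp
  have hbase : ∫ ω, Real.log ((P.rnDeriv Q ω).toReal) ∂P
      = - ∫ ω, Real.log (f (X ω)) ∂P := by
    rw [← integral_neg]
    refine integral_congr_ae ?_
    filter_upwards [h1] with ω h
    rw [h, ENNReal.toReal_inv, ENNReal.toReal_ofReal (hf_pos _).le, Real.log_inv]
  have hPX : IsProbabilityMeasure (P.map X) := Measure.isProbabilityMeasure_map hX.aemeasurable
  have h2 : (P.map X).rnDeriv (Q.map X) =ᵐ[P.map X] fun x => (ENNReal.ofReal (f x))⁻¹ := by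
    rw [hQ, map_withDensity_comp P X hX _ hg]
    have := Measure.rnDeriv_withDensity_right (P.map X) (P.map X)
      (f := fun x => ENNReal.ofReal (f x)) hg.aemeasurable
      (Filter.Eventually.of_forall fun x => by
        simp [hf_pos x])
      (Filter.Eventually.of_forall fun x => ENNReal.ofReal_ne_top)
    filter_upwards [this, Measure.rnDeriv_self (P.map X)] with x h h2
    rw [h, h2]; simp
  have hpush : ∫ x, Real.log (((P.map X).rnDeriv (Q.map X)) x).toReal ∂(P.map X)
      = - ∫ ω, Real.log (f (X ω)) ∂P := by
    have : ∫ x, Real.log (((P.map X).rnDeriv (Q.map X)) x).toReal ∂(P.map X)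
        = ∫ x, - Real.log (f x) ∂(P.map X) := by
      refine integral_congr_ae ?_
      filter_upwards [h2] with x h
      rw [h, ENNReal.toReal_inv, ENNReal.toReal_ofReal (hf_pos _).le, Real.log_inv]
    rw [this, integral_map hX.aemeasurable (f := fun x => -Real.log (f x))
      (hf_meas.log.neg.aestronglyMeasurable), integral_neg]
  exact ⟨hpush.trans hbase.symm, hbase⟩
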